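/- Let k ∈ ℕ and let {(A_{n,1},...,A_{n,k})}_{n∈ℕ} be a sequence of k-tuples of subsets of a set Y. Then there is an infinite set F ⊆ ℕ such that either the family {(A_{n,1},...,A_{n,k}) : n ∈ F} is independent, or for every y ∈ Y there exists j ∈ {1,...,k} such that the set {n ∈ F : y ∈ A_{n,j}} is finite. -/
import Mathlib

open Set

namespace RosenthalAux

variable {Y : Type*} {k : ℕ}

/-- `y` hits every coordinate infinitely often inside `G`. -/
def Rich (A : ℕ → Fin k → Set Y) (y : Y) (G : Set ℕ) : Prop :=
  ∀ j, {n ∈ G | y ∈ A n j}.Infinite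

/-- Every infinite subset of `G` carries a rich witness for the pattern `(t, σ)`. -/
def RR (A : ℕ → Fin k → Set Y) (t : Finset ℕ) (σ : ℕ → Fin k) (G : Set ℕ) : Prop :=
  ∀ H, H ⊆ G → H.Infinite → ∃ y, (∀ m ∈ t, y ∈ A m (σ m)) ∧ Rich A y H

lemma RR.mono {A : ℕ → Fin k → Set Y} {t : Finset ℕ} {σ : ℕ → Fin k} {G G' : Set ℕ}
    (h : RR A t σ G) (hsub : G' ⊆ G) : RR A t σ G' :=
  fun H hH hi => h H (hH.trans hsub) hi

lemma sep_gt_infinite {G : Set ℕ} (hG : G.Infinite) (b : ℕ) : {m ∈ G | b < m}.Infinite :=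
  (hG.diff (finite_Iic b)).mono (fun _ hx => ⟨hx.1, not_le.mp hx.2⟩)

lemma step (A : ℕ → Fin k → Set Y) (s : Finset ℕ) (G : Set ℕ) (hG : G.Infinite) (b : ℕ)
    (hR : ∀ t ⊆ s, ∀ σ : ℕ → Fin k, RR A t σ G) :
    ∃ n ∈ G, b < n ∧ ∃ G', G' ⊆ G ∧ G'.Infinite ∧ (∀ m ∈ G', n < m) ∧
      ∀ t ⊆ insert n s, ∀ σ : ℕ → Fin k, RR A t σ G' := by
  by_contra hcon
  push_neg at hcon
  have NO : ∀ n ∈ G, b < n → ∀ G', G' ⊆ G → G'.Infinite → (∀ m ∈ G', n < m) →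
      ∃ t, t ⊆ s ∧ ∃ σ : ℕ → Fin k, ∃ j : Fin k, ∃ H, H ⊆ G' ∧ H.Infinite ∧
        ∀ y, (∀ m ∈ t, y ∈ A m (σ m)) → y ∈ A n j → ¬ Rich A y H := by
    intro n hn hb G' hsub hinf hgt
    obtain ⟨t₀, ht₀, σ, hnR⟩ := hcon n hn hb G' hsub hinf hgt
    unfold RR at hnR
    push_neg at hnR
    obtain ⟨H, hH, hHinf, hkill⟩ := hnR
    by_cases hmem : n ∈ t₀
    · refine ⟨t₀.erase n, ?_, σ, σ n, H, hH, hHinf, ?_⟩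
      · intro x hx
        rcases Finset.mem_insert.mp (ht₀ (Finset.mem_of_mem_erase hx)) with h | h
        · exact absurd h (Finset.ne_of_mem_erase hx)
        · exact h
      · intro y hy hyn
        apply hkill
        intro m hm
        by_cases hmn : m = n
        · subst hmn; exact hyn
        · exact hy m (Finset.mem_erase.mpr ⟨hmn, hm⟩)
    · have ht₀s : t₀ ⊆ s := by
        intro x hx
        rcases Finset.mem_insert.mp (ht₀ hx) with h | h
        · exact absurd (h ▸ hx) hmem
        · exact h
      obtain ⟨y, hy, hyr⟩ := hR t₀ ht₀s σ H (hH.trans hsub) hHinf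
      exact absurd hyr (hkill y hy)
  -- the state type for the diagonalization
  let St := {q : ℕ × Set ℕ //
    q.1 ∈ G ∧ b < q.1 ∧ q.2 ⊆ G ∧ q.2.Infinite ∧ (∀ m ∈ q.2, q.1 < m) ∧
      ∃ t, t ⊆ s ∧ ∃ σ : ℕ → Fin k, ∃ j : Fin k,
        ∀ y, (∀ m ∈ t, y ∈ A m (σ m)) → y ∈ A q.1 j → ¬ Rich A y q.2}
  have hq0 : ∃ _ : St, True := by
    obtain ⟨n₀, hn₀G, hn₀b⟩ := (sep_gt_infinite hG b).nonempty
    obtain ⟨t, hts, σ, j, H, hH, hHinf, hkill⟩ :=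
      NO n₀ hn₀G hn₀b {m ∈ G | n₀ < m} (fun x hx => hx.1) (sep_gt_infinite hG n₀)
        (fun m hm => hm.2)
    exact ⟨⟨(n₀, H), hn₀G, hn₀b, fun x hx => (hH hx).1, hHinf,
      fun m hm => (hH hm).2, t, hts, σ, j, hkill⟩, trivial⟩
  have hPhi : ∀ q : St, ∃ q' : St, q'.1.1 ∈ q.1.2 ∧ q'.1.2 ⊆ q.1.2 := by
    intro q
    obtain ⟨⟨n, Hq⟩, hnG, hnb, hHG, hHinf, hgt, _⟩ := q
    obtain ⟨n', hn'⟩ := hHinf.nonempty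
    have hn'G : n' ∈ G := hHG hn'
    have hbn' : b < n' := lt_trans hnb (hgt n' hn')
    obtain ⟨t, hts, σ, j, H', hH', hH'inf, hkill⟩ :=
      NO n' hn'G hbn' {m ∈ Hq | n' < m} (fun x hx => hHG hx.1)
        (sep_gt_infinite hHinf n') (fun m hm => hm.2)
    exact ⟨⟨(n', H'), hn'G, hbn', fun x hx => hHG (hH' hx).1, hH'inf,
      fun m hm => (hH' hm).2, t, hts, σ, j, hkill⟩, hn', fun x hx => (hH' hx).1⟩
  choose Phi hPhi1 hPhi2 using hPhi
  obtain ⟨q0, -⟩ := hq0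
  let f : ℕ → St := fun i => Nat.rec q0 (fun _ q => Phi q) i
  let N : ℕ → ℕ := fun i => (f i).1.1
  let Hs : ℕ → Set ℕ := fun i => (f i).1.2
  have hNG : ∀ i, N i ∈ G := fun i => (f i).2.1
  have hHsG : ∀ i, Hs i ⊆ G := fun i => (f i).2.2.2.1
  have hHsInf : ∀ i, (Hs i).Infinite := fun i => (f i).2.2.2.2.1
  have hgt : ∀ i, ∀ m ∈ Hs i, N i < m := fun i => (f i).2.2.2.2.2.1
  have hkillE : ∀ i, ∃ t, t ⊆ s ∧ ∃ σ : ℕ → Fin k, ∃ j : Fin k,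
      ∀ y, (∀ m ∈ t, y ∈ A m (σ m)) → y ∈ A (N i) j → ¬ Rich A y (Hs i) :=
    fun i => (f i).2.2.2.2.2.2
  choose KT hKTs Kσ Kj hkill using hkillE
  have hstep1 : ∀ i, N (i + 1) ∈ Hs i := fun i => hPhi1 (f i)
  have hstep2 : ∀ i, Hs (i + 1) ⊆ Hs i := fun i => hPhi2 (f i)
  have hmono : Antitone Hs := antitone_nat_of_succ_le hstep2
  have hNmono : StrictMono N := strictMono_nat_of_lt_succ
    (fun i => hgt i (N (i + 1)) (hstep1 i))
  have hNin : ∀ i l, i < l → N l ∈ Hs i := by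
    intro i l hil
    obtain ⟨m, rfl⟩ := Nat.exists_eq_succ_of_ne_zero (by omega : l ≠ 0)
    exact hmono (Nat.lt_succ_iff.mp hil) (hstep1 m)
  -- pigeonhole over pattern classes
  let C := ({t : Finset ℕ // t ∈ s.powerset} × ({x : ℕ // x ∈ s} → Fin k) × Fin k)
  let cls : ℕ → C := fun i =>
    (⟨KT i, Finset.mem_powerset.mpr (hKTs i)⟩, fun x => Kσ i x.1, Kj i)
  obtain ⟨c, hc⟩ := Finite.exists_infinite_fiber cls
  have hFib : (cls ⁻¹' {c}).Infinite := Set.infinite_coe_iff.mp hc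
  have hH2 : (N '' (cls ⁻¹' {c})).Infinite := hFib.image (hNmono.injective.injOn)
  let σs : ℕ → Fin k := fun m => if h : m ∈ s then c.2.1 ⟨m, h⟩ else c.2.2
  have hts : c.1.1 ⊆ s := Finset.mem_powerset.mp c.1.2
  obtain ⟨y, hyp, hyr⟩ := hR c.1.1 hts σs (N '' (cls ⁻¹' {c}))
    (by rintro x ⟨i, -, rfl⟩; exact hNG i) hH2
  obtain ⟨m0, hmem0, hyA0⟩ := (hyr c.2.2).nonempty
  obtain ⟨i, hiFib, rfl⟩ := hmem0
  have hcls : cls i = c := hiFib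
  have ht_eq : KT i = c.1.1 := congrArg (fun z : C => z.1.1) hcls
  have hσ_eq : (fun x : {x : ℕ // x ∈ s} => Kσ i x.1) = c.2.1 :=
    congrArg (fun z : C => z.2.1) hcls
  have hj_eq : Kj i = c.2.2 := congrArg (fun z : C => z.2.2) hcls
  have hrich : Rich A y (Hs i) := by
    intro j'
    have h1 : ({x ∈ N '' (cls ⁻¹' {c}) | y ∈ A x j'} \ Iic (N i))
        ⊆ {x ∈ Hs i | y ∈ A x j'} := by
      rintro x ⟨⟨⟨l, hlFib, rfl⟩, hyA'⟩, hgtx⟩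
      have hlgt : N i < N l := not_le.mp hgtx
      exact ⟨hNin i l (hNmono.lt_iff_lt.mp hlgt), hyA'⟩
    exact (((hyr j').diff (finite_Iic (N i))).mono h1)
  refine hkill i y ?_ ?_ hrich
  · intro m hm
    have hm' : m ∈ c.1.1 := ht_eq ▸ hm
    have hms : m ∈ s := hts hm'
    have e1 : Kσ i m = c.2.1 ⟨m, hms⟩ := congrFun hσ_eq ⟨m, hms⟩
    have e2 : σs m = c.2.1 ⟨m, hms⟩ := dif_pos hms
    rw [e1, ← e2]
    exact hyp m hm'
  · rw [hj_eq]; exact hyA0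

lemma main (A : ℕ → Fin k → Set Y)
    (hbase : ∀ G : Set ℕ, G.Infinite → ∃ y, Rich A y G) :
    ∃ F : Set ℕ, F.Infinite ∧ ∀ J : Finset ℕ, J.Nonempty → ↑J ⊆ F → ∀ σ : ℕ → Fin k,
      (⋂ n ∈ J, A n (σ n)).Nonempty := by
  let St := {q : ℕ × Finset ℕ × Set ℕ //
    q.2.2.Infinite ∧ (∀ m ∈ q.2.2, q.1 < m) ∧ (∀ x ∈ q.2.1, x ≤ q.1) ∧
      ∀ t ⊆ q.2.1, ∀ σ : ℕ → Fin k, RR A t σ q.2.2}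
  have hq0 : ∃ _ : St, True := by
    refine ⟨⟨(0, ∅, Ioi 0), Ioi_infinite 0, fun m hm => hm, fun x hx => absurd hx
      (Finset.notMem_empty x), ?_⟩, trivial⟩
    intro t ht σ H hH hHinf
    obtain ⟨y, hy⟩ := hbase H hHinf
    refine ⟨y, ?_, hy⟩
    intro m hm
    rw [Finset.subset_empty.mp ht] at hm
    exact absurd hm (Finset.notMem_empty m)
  have hPhi : ∀ q : St, ∃ q' : St, q.1.1 < q'.1.1 ∧ q'.1.2.1 = insert q'.1.1 q.1.2.1 := by
    intro q
    obtain ⟨⟨b, s, G⟩, hGinf, hGgt, hsle, hRR⟩ := q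
    obtain ⟨n, hnG, hbn, G', hG'G, hG'inf, hG'gt, hRR'⟩ := step A s G hGinf b hRR
    refine ⟨⟨(n, insert n s, G'), hG'inf, hG'gt, ?_, hRR'⟩, hGgt n hnG, rfl⟩
    intro x hx
    rcases Finset.mem_insert.mp hx with h | h
    · exact le_of_eq h
    · exact le_trans (hsle x h) (le_of_lt (hGgt n hnG))
  choose Phi hPhi1 hPhi2 using hPhi
  obtain ⟨q0, -⟩ := hq0
  let g : ℕ → St := fun i => Nat.rec q0 (fun _ q => Phi q) i
  let N : ℕ → ℕ := fun i => (g i).1.1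
  let Sm : ℕ → Finset ℕ := fun i => (g i).1.2.1
  let Gm : ℕ → Set ℕ := fun i => (g i).1.2.2
  have hGinf : ∀ i, (Gm i).Infinite := fun i => (g i).2.1
  have hRR : ∀ i, ∀ t ⊆ Sm i, ∀ σ : ℕ → Fin k, RR A t σ (Gm i) := fun i => (g i).2.2.2.2
  have hNmono : StrictMono N := strictMono_nat_of_lt_succ (fun i => hPhi1 (g i))
  have hSm : ∀ i, Sm (i + 1) = insert (N (i + 1)) (Sm i) := fun i => hPhi2 (g i)
  have hmemS : ∀ m i, 1 ≤ i → i ≤ m → N i ∈ Sm m := by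
    intro m
    induction m with
    | zero => intro i h1 h2; omega
    | succ m ih =>
      intro i h1 h2
      rw [hSm m]
      by_cases h : i = m + 1
      · exact h ▸ Finset.mem_insert_self _ _
      · exact Finset.mem_insert_of_mem (ih i h1 (by omega))
  refine ⟨N '' Ici 1, (Ici_infinite 1).image (hNmono.injective.injOn), ?_⟩
  intro J hJne hJF σ
  have hidx : ∀ x : ℕ, x ∈ J → ∃ i, 1 ≤ i ∧ N i = x := by
    intro x hx
    obtain ⟨i, hi, rfl⟩ := hJF hx
    exact ⟨i, hi, rfl⟩
  choose idx hidx1 hidx2 using hidx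
  let M := J.attach.sup (fun x => idx x.1 x.2)
  have hJS : ∀ x ∈ J, x ∈ Sm M := by
    intro x hx
    have h3 : idx x hx ≤ M :=
      Finset.le_sup (f := fun x : {x // x ∈ J} => idx x.1 x.2) (Finset.mem_attach _ ⟨x, hx⟩)
    exact hidx2 x hx ▸ hmemS M (idx x hx) (hidx1 x hx) h3
  obtain ⟨y, hy, -⟩ := hRR M J hJS σ (Gm M) (subset_refl _) (hGinf M)
  exact ⟨y, Set.mem_iInter₂.mpr hy⟩

end RosenthalAux

theorem rosenthal_dichotomy {Y : Type*} (k : ℕ) (A : ℕ → Fin k → Set Y) :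
    ∃ F : Set ℕ, F.Infinite ∧
      ((∀ J : Finset ℕ, J.Nonempty → ↑J ⊆ F → ∀ σ : ℕ → Fin k,
          (⋂ n ∈ J, A n (σ n)).Nonempty) ∨
        (∀ y : Y, ∃ j : Fin k, {n ∈ F | y ∈ A n j}.Finite)) := by
  by_cases h : ∃ F : Set ℕ, F.Infinite ∧ ∀ y : Y, ∃ j : Fin k, {n ∈ F | y ∈ A n j}.Finite
  · obtain ⟨F, hF, h2⟩ := h
    exact ⟨F, hF, Or.inr h2⟩
  · push_neg at h
    have hbase : ∀ G : Set ℕ, G.Infinite → ∃ y, RosenthalAux.Rich A y G := by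
      intro G hG
      obtain ⟨y, hy⟩ := h G hG
      exact ⟨y, fun j => hy j⟩
    obtain ⟨F, hF, h1⟩ := RosenthalAux.main A hbase
    exact ⟨F, hF, Or.inl h1⟩
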